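/- Let n be an even positive integer and let T_0, T_1 be disjoint nonempty sets of even-weight binary words of length n. Then (T_0, T_1) is an extended 1-perfect trade of length n if and only if the following three conditions hold: (a) no two distinct words of T_0 are at Hamming distance 2; (b) no two distinct words of T_1 are at Hamming distance 2; (c) every word of T_0 is at Hamming distance 2 from exactly n/2 words of T_1, and every word of T_1 is at Hamming distance 2 from exactly n/2 words of T_0. Equivalently, the subgraph of the halved n-cube induced by T_0 ∪ T_1 is bipartite with parts T_0, T_1 and regular of degree n/2. -/

import Mathlib

variable {n : ℕ}

local notation "V" => Fin n → ZMod 2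

def sing (i : Fin n) : Fin n → ZMod 2 := Pi.single i 1

lemma zmod2 (a : ZMod 2) : a = 0 ∨ a = 1 := by revert a; decide

lemma addself (v : V) : v + v = 0 := by
  funext i
  rcases zmod2 (v i) with h | h <;> simp [h]; decide

lemma cancel (a b : V) : a + (a + b) = b := by rw [← add_assoc, addself, zero_add]

lemma norm_sum (s : Finset (Fin n)) : hammingNorm (∑ i ∈ s, sing i) = s.card := by
  have h : ∀ j, (∑ i ∈ s, sing i) j = if j ∈ s then 1 else 0 := by
    intro j
    rw [Finset.sum_apply]
    simpa [sing] using Finset.sum_pi_single (f := fun _ : Fin n => (1 : ZMod 2)) s j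
  rw [hammingNorm]
  congr 1
  ext j
  simp only [Finset.mem_filter, Finset.mem_univ, true_and, h j]
  by_cases hj : j ∈ s <;> simp [hj]

lemma dist_add (x y : V) : hammingDist x y = hammingNorm (x + y) := by
  rw [hammingDist_eq_hammingNorm]
  congr 1
  funext i
  rcases zmod2 (x i) with h | h <;> rcases zmod2 (y i) with h' | h' <;>
    simp [h, h'] <;> decide

lemma norm_sing (i : Fin n) : hammingNorm (sing i) = 1 := by
  have := norm_sum ({i} : Finset (Fin n))
  simpa using this

lemma norm_pair {i j : Fin n} (h : i ≠ j) : hammingNorm (sing i + sing j) = 2 := by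
  have := norm_sum ({i, j} : Finset (Fin n))
  rw [Finset.sum_pair h, Finset.card_pair h] at this
  exact this

lemma norm_triple {i j k : Fin n} (hij : i ≠ j) (hik : i ≠ k) (hjk : j ≠ k) :
    hammingNorm (sing i + sing j + sing k) = 3 := by
  have := norm_sum ({i, j, k} : Finset (Fin n))
  rw [show ({i, j, k} : Finset (Fin n)) = insert i {j, k} by rfl] at this
  rw [Finset.sum_insert (by simp [hij, hik]), Finset.sum_pair hjk,
    Finset.card_insert_of_notMem (by simp [hij, hik]), Finset.card_pair hjk] at this
  rw [← add_assoc] at this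
  exact this

lemma cast_norm (v : V) : ((hammingNorm v : ℕ) : ZMod 2) = ∑ i, v i := by
  rw [hammingNorm, Finset.card_eq_sum_ones, Nat.cast_sum]
  rw [← Finset.sum_filter_ne_zero Finset.univ]
  apply Finset.sum_congr rfl
  intro i hi
  simp only [Finset.mem_filter] at hi
  rcases zmod2 (v i) with h | h
  · exact absurd h hi.2
  · simp [h]

lemma even_norm_iff (v : V) : Even (hammingNorm v) ↔ ∑ i, v i = 0 := by
  rw [← cast_norm]
  have h1 : Even (hammingNorm v) ↔ (2 : ℕ) ∣ hammingNorm v := by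
    constructor
    · rintro ⟨k, hk⟩; exact ⟨k, by omega⟩
    · rintro ⟨k, hk⟩; exact ⟨k, by omega⟩
  rw [h1]
  exact (ZMod.natCast_eq_zero_iff _ 2).symm

lemma sum_sing (i : Fin n) : ∑ j, sing i j = 1 := by
  have h := cast_norm (sing i)
  rw [norm_sing] at h
  simpa using h.symm

lemma norm_one {v : V} (h : hammingNorm v = 1) : ∃ i, v = sing i := by
  rw [hammingNorm] at h
  obtain ⟨i, hi⟩ := Finset.card_eq_one.mp h
  refine ⟨i, funext fun j => ?_⟩
  have hmem : ∀ k : Fin n, v k ≠ 0 ↔ k = i := by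
    intro k
    rw [show (v k ≠ 0) ↔ k ∈ Finset.univ.filter (fun m => v m ≠ 0) by simp, hi,
      Finset.mem_singleton]
  by_cases hj : j = i
  · subst hj
    have : v j ≠ 0 := (hmem j).mpr rfl
    rcases zmod2 (v j) with h' | h'
    · exact absurd h' this
    · rw [h', sing, Pi.single_eq_same]
  · have : v j = 0 := by
      by_contra hc
      exact hj ((hmem j).mp hc)
    rw [this, sing, Pi.single_eq_of_ne hj]

lemma norm_two {v : V} (h : hammingNorm v = 2) :
    ∃ i j, i ≠ j ∧ v = sing i + sing j := by
  rw [hammingNorm] at h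
  obtain ⟨i, j, hij, hset⟩ := Finset.card_eq_two.mp h
  refine ⟨i, j, hij, funext fun k => ?_⟩
  have hmem : ∀ m : Fin n, v m ≠ 0 ↔ m = i ∨ m = j := by
    intro m
    rw [show (v m ≠ 0) ↔ m ∈ Finset.univ.filter (fun l => v l ≠ 0) by simp, hset]
    simp
  have hval : (sing i + sing j) k = if k = i ∨ k = j then 1 else 0 := by
    by_cases hk : k = i ∨ k = j
    · rcases hk with hk | hk <;> subst hk <;>
        simp [sing, Pi.single_eq_same, Pi.single_eq_of_ne, hij, hij.symm, Ne.symm] <;>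
        rw [Pi.single_eq_of_ne (by tauto)] <;> simp
    · push_neg at hk
      rw [if_neg (by tauto)]
      simp [sing, Pi.single_eq_of_ne hk.1, Pi.single_eq_of_ne hk.2]
  rw [hval]
  by_cases hk : k = i ∨ k = j
  · simp only [hk, if_true]
    have : v k ≠ 0 := (hmem k).mpr hk
    rcases zmod2 (v k) with h' | h'
    · exact absurd h' this
    · exact h'
  · simp only [hk, if_false]
    by_contra hc
    exact hk ((hmem k).mp hc)

lemma mem_pair {i j k : Fin n} (h : (sing i + sing j) k ≠ 0) : k = i ∨ k = j := by
  by_contra hc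
  push_neg at hc
  simp [sing, Pi.single_eq_of_ne hc.1, Pi.single_eq_of_ne hc.2] at h

lemma ABA (a b : V) : a + b + a = b := by
  rw [add_comm a b, add_assoc, addself, add_zero]

lemma even_addv {x y : V} (hx : Even (hammingNorm x)) (hy : Even (hammingNorm y)) :
    Even (hammingNorm (x + y)) := by
  rw [even_norm_iff] at *
  simp only [Pi.add_apply, Finset.sum_add_distrib, hx, hy, add_zero]

lemma odd_add_sing {x : V} (hx : Even (hammingNorm x)) (i : Fin n) :
    Odd (hammingNorm (x + sing i)) := by
  rw [← Nat.not_even_iff_odd, even_norm_iff]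
  rw [even_norm_iff] at hx
  simp only [Pi.add_apply, Finset.sum_add_distrib, hx, sum_sing, zero_add]
  decide

lemma fwd_free {A : Finset V}
    (hevA : ∀ v ∈ A, Even (hammingNorm v))
    (htr : ∀ x : Fin n → ZMod 2, Odd (hammingNorm x) →
      (A.filter fun y => hammingDist x y = 1).card ≤ 1) :
    ∀ y ∈ A, ∀ z ∈ A, y ≠ z → hammingDist y z ≠ 2 := by
  intro y hy z hz hyz hd2
  rw [dist_add] at hd2
  obtain ⟨j, k, hjk, hyzjk⟩ := norm_two hd2
  have hodd := odd_add_sing (hevA y hy) j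
  have h1 : hammingDist (y + sing j) y = 1 := by
    rw [dist_add, ABA, norm_sing]
  have h2 : hammingDist (y + sing j) z = 1 := by
    rw [dist_add]
    have hxz : y + sing j + z = sing k := by
      calc y + sing j + z = sing j + (y + z) := by ring
        _ = sing j + (sing j + sing k) := by rw [hyzjk]
        _ = sing k := cancel _ _
    rw [hxz, norm_sing]
  have hsub : ({y, z} : Finset (Fin n → ZMod 2)) ⊆
      A.filter fun w => hammingDist (y + sing j) w = 1 := by
    intro w hw
    simp only [Finset.mem_insert, Finset.mem_singleton] at hw
    rcases hw with h | h <;> subst h <;> simp [Finset.mem_filter, hy, hz, h1, h2]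
  have hcard := Finset.card_le_card hsub
  rw [Finset.card_pair hyz] at hcard
  have := htr (y + sing j) hodd
  omega

lemma fwd_reg {A B : Finset (Fin n → ZMod 2)} (hdisj : ∀ v ∈ A, v ∉ B)
    (hevA : ∀ v ∈ A, Even (hammingNorm v))
    (htr : ∀ x : Fin n → ZMod 2, Odd (hammingNorm x) →
      (A.filter fun y => hammingDist x y = 1).card =
        (B.filter fun y => hammingDist x y = 1).card ∧
      (A.filter fun y => hammingDist x y = 1).card ≤ 1)
    {c : Fin n → ZMod 2} (hc : c ∈ A) :
    (B.filter fun y => hammingDist c y = 2).card = n / 2 := by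
  have step1 : ∀ i : Fin n,
      (B.filter fun y => hammingDist (c + sing i) y = 1).card = 1 := by
    intro i
    obtain ⟨heq, hle⟩ := htr (c + sing i) (odd_add_sing (hevA c hc) i)
    have hcmem : c ∈ A.filter fun y => hammingDist (c + sing i) y = 1 := by
      simp only [Finset.mem_filter]
      refine ⟨hc, ?_⟩
      rw [dist_add, ABA, norm_sing]
    have h1 : 0 < (A.filter fun y => hammingDist (c + sing i) y = 1).card :=
      Finset.card_pos.mpr ⟨c, hcmem⟩
    omega
  have step2a : ∀ i : Fin n, ∀ y ∈ B, hammingDist (c + sing i) y = 1 →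
      hammingDist c y = 2 := by
    intro i y hyB hdist
    rw [dist_add] at hdist
    obtain ⟨j, hj⟩ := norm_one hdist
    have hy : y = c + sing i + sing j := by
      calc y = (c + sing i) + ((c + sing i) + y) := (cancel _ _).symm
        _ = (c + sing i) + sing j := by rw [show (c + sing i) + y = sing j from hj]
    by_cases hij : i = j
    · exfalso
      have hyc : y = c := by
        rw [hy, hij, add_assoc, addself, add_zero]
      exact hdisj c hc (hyc ▸ hyB)
    · rw [dist_add]
      have hcy : c + y = sing i + sing j := by
        calc c + y = c + (c + (sing i + sing j)) := by rw [hy]; ring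
          _ = sing i + sing j := cancel _ _
      rw [hcy, norm_pair hij]
  have step2b : ∀ y ∈ B, hammingDist c y = 2 →
      (Finset.univ.filter fun i : Fin n => hammingDist (c + sing i) y = 1).card = 2 := by
    intro y hyB hd2
    rw [dist_add] at hd2
    obtain ⟨j, k, hjk, hcy⟩ := norm_two hd2
    have key : ∀ i : Fin n, hammingDist (c + sing i) y = 1 ↔ (i = j ∨ i = k) := by
      intro i
      rw [dist_add]
      have hrw : c + sing i + y = sing i + (sing j + sing k) := by
        calc c + sing i + y = sing i + (c + y) := by ring
          _ = sing i + (sing j + sing k) := by rw [hcy]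
      rw [hrw]
      constructor
      · intro h1
        by_contra hcon
        push_neg at hcon
        rw [← add_assoc, norm_triple hcon.1 hcon.2 hjk] at h1
        omega
      · rintro (h | h)
        · rw [h, cancel, norm_sing]
        · rw [h, show sing k + (sing j + sing k) = sing j by
            calc sing k + (sing j + sing k) = sing j + (sing k + sing k) := by ring
              _ = sing j := by rw [addself, add_zero], norm_sing]
    have hset : (Finset.univ.filter fun i : Fin n => hammingDist (c + sing i) y = 1)
        = {j, k} := by
      ext i
      simp [key i]
    rw [hset, Finset.card_pair hjk]
  have count1 : ∑ i : Fin n,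
      (B.filter fun y => hammingDist (c + sing i) y = 1).card = n := by
    simp [step1]
  have swap : ∑ i : Fin n, (B.filter fun y => hammingDist (c + sing i) y = 1).card
      = ∑ y ∈ B,
        (Finset.univ.filter fun i : Fin n => hammingDist (c + sing i) y = 1).card := by
    simp only [Finset.card_filter]
    rw [Finset.sum_comm]
  have restrict : ∑ y ∈ B,
        (Finset.univ.filter fun i : Fin n => hammingDist (c + sing i) y = 1).card
      = ∑ y ∈ B.filter (fun y => hammingDist c y = 2),
        (Finset.univ.filter fun i : Fin n => hammingDist (c + sing i) y = 1).card := by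
    symm
    apply Finset.sum_subset (Finset.filter_subset _ _)
    intro y hyB hynot
    rw [Finset.card_eq_zero, Finset.filter_eq_empty_iff]
    intro i _
    intro hdist
    have h2 := step2a i y hyB hdist
    simp only [Finset.mem_filter, hyB, true_and] at hynot
    exact hynot h2
  have final : ∑ y ∈ B.filter (fun y => hammingDist c y = 2),
        (Finset.univ.filter fun i : Fin n => hammingDist (c + sing i) y = 1).card
      = 2 * (B.filter fun y => hammingDist c y = 2).card := by
    rw [Finset.sum_congr rfl
      (fun y hy => step2b y (Finset.mem_filter.mp hy).1 (Finset.mem_filter.mp hy).2)]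
    rw [Finset.sum_const, smul_eq_mul, mul_comm]
  omega

lemma bwd_le_one {A : Finset (Fin n → ZMod 2)}
    (hevA : ∀ v ∈ A, Even (hammingNorm v))
    (hfree : ∀ y ∈ A, ∀ z ∈ A, y ≠ z → hammingDist y z ≠ 2) (x : Fin n → ZMod 2) :
    (A.filter fun y => hammingDist x y = 1).card ≤ 1 := by
  rw [Finset.card_le_one]
  intro y hy z hz
  simp only [Finset.mem_filter] at hy hz
  by_contra hyz
  have htri := hammingDist_triangle y x z
  rw [hammingDist_comm y x] at htri
  have h2 : hammingDist y z ≤ 2 := by omega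
  have hne0 : hammingDist y z ≠ 0 := fun h => hyz (hammingDist_eq_zero.mp h)
  have hev2 : Even (hammingDist y z) := by
    rw [dist_add]; exact even_addv (hevA y hy.1) (hevA z hz.1)
  have hd2 : hammingDist y z = 2 := by
    obtain ⟨k, hk⟩ := hev2; omega
  exact hfree y hy.1 z hz.1 hyz hd2

lemma bwd_exist (hn : 0 < n) (hne : Even n) {B : Finset (Fin n → ZMod 2)}
    (hfree : ∀ z ∈ B, ∀ w ∈ B, z ≠ w → hammingDist z w ≠ 2)
    {y x : Fin n → ZMod 2}
    (hreg : (B.filter fun z => hammingDist y z = 2).card = n / 2)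
    (hxy : hammingDist x y = 1) : ∃ z ∈ B, hammingDist x z = 1 := by
  rw [dist_add] at hxy
  obtain ⟨i, hxyi⟩ := norm_one hxy
  set N := B.filter fun z => hammingDist y z = 2 with hN
  have hrep : ∀ z ∈ N, ∀ j : Fin n, (y + z) j ≠ 0 →
      ∃ a, a ≠ j ∧ y + z = sing j + sing a := by
    intro z hz j hj
    have hz2 : hammingNorm (y + z) = 2 := by
      have := (Finset.mem_filter.mp hz).2
      rwa [dist_add] at this
    obtain ⟨a, b, hab, hyz⟩ := norm_two hz2
    have hj' : j = a ∨ j = b := mem_pair (hyz ▸ hj)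
    rcases hj' with h | h
    · subst h
      exact ⟨b, Ne.symm hab, hyz⟩
    · subst h
      exact ⟨a, hab, by rw [hyz, add_comm]⟩
  have hinner : ∀ j : Fin n, (N.filter fun z => (y + z) j ≠ 0).card ≤ 1 := by
    intro j
    rw [Finset.card_le_one]
    intro z hz w hw
    by_contra hzw
    simp only [Finset.mem_filter] at hz hw
    obtain ⟨a, haj, hza⟩ := hrep z hz.1 j hz.2
    obtain ⟨b, hbj, hwb⟩ := hrep w hw.1 j hw.2
    have hab : a ≠ b := by
      intro h
      apply hzw
      subst h
      have hzeq := hza.trans hwb.symm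
      calc z = y + (y + z) := (cancel _ _).symm
        _ = y + (y + w) := by rw [hzeq]
        _ = w := cancel _ _
    have hdzw : hammingDist z w = 2 := by
      rw [dist_add]
      have hsum : z + w = sing a + sing b := by
        calc z + w = (y + z) + (y + w) := by
              rw [show (y + z) + (y + w) = (y + y) + (z + w) by ring, addself, zero_add]
          _ = (sing j + sing a) + (sing j + sing b) := by rw [hza, hwb]
          _ = (sing j + sing j) + (sing a + sing b) := by ring
          _ = sing a + sing b := by rw [addself, zero_add]
      rw [hsum, norm_pair hab]
    exact hfree z (Finset.mem_filter.mp hz.1).1 w (Finset.mem_filter.mp hw.1).1 hzw hdzw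
  by_contra hcon
  push_neg at hcon
  have hzero : ∀ z ∈ N, ¬ (y + z) i ≠ 0 := by
    intro z hz hzi
    obtain ⟨a, hai, hza⟩ := hrep z hz i hzi
    apply hcon z (Finset.mem_filter.mp hz).1
    rw [dist_add]
    have hxz : x + z = sing a := by
      calc x + z = (x + y) + (y + z) := by
            rw [show (x + y) + (y + z) = (y + y) + (x + z) by ring, addself, zero_add]
        _ = sing i + (sing i + sing a) := by rw [hxyi, hza]
        _ = sing a := cancel _ _
    rw [hxz, norm_sing]
  have hsum : ∑ z ∈ N, hammingNorm (y + z) = n := by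
    have h2 : ∀ z ∈ N, hammingNorm (y + z) = 2 := by
      intro z hz
      have := (Finset.mem_filter.mp hz).2
      rwa [dist_add] at this
    rw [Finset.sum_congr rfl h2, Finset.sum_const, smul_eq_mul]
    have hNc : N.card = n / 2 := hreg
    obtain ⟨m, hm⟩ := hne
    omega
  have hswap : ∑ z ∈ N, hammingNorm (y + z)
      = ∑ j : Fin n, (N.filter fun z => (y + z) j ≠ 0).card := by
    have hnorm : ∀ z : Fin n → ZMod 2, hammingNorm (y + z)
        = (Finset.univ.filter fun j => (y + z) j ≠ 0).card := fun z => by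
      rw [hammingNorm]
    simp only [hnorm, Finset.card_filter]
    rw [Finset.sum_comm]
  have hzero' : (N.filter fun z => (y + z) i ≠ 0).card = 0 := by
    rw [Finset.card_eq_zero, Finset.filter_eq_empty_iff]
    exact hzero
  have hbound : ∑ j : Fin n, (N.filter fun z => (y + z) j ≠ 0).card ≤ n - 1 := by
    rw [← Finset.add_sum_erase _ _ (Finset.mem_univ i), hzero', zero_add]
    calc ∑ j ∈ Finset.univ.erase i, (N.filter fun z => (y + z) j ≠ 0).card
        ≤ ∑ _j ∈ Finset.univ.erase i, 1 :=
          Finset.sum_le_sum (fun j _ => hinner j)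
      _ = (Finset.univ.erase i).card := by simp
      _ = n - 1 := by simp [Finset.card_erase_of_mem]
  omega

/-- An extended 1-perfect trade of length `n`: a pair of disjoint nonempty sets of
even-weight binary words such that for every odd-weight word `x`, the sphere of
radius 1 around `x` contains equally many (0 or 1) elements of each set. -/
def IsExtTrade {n : ℕ} (T₀ T₁ : Finset (Fin n → ZMod 2)) : Prop :=
  T₀.Nonempty ∧ T₁.Nonempty ∧ Disjoint T₀ T₁ ∧
  (∀ x ∈ T₀ ∪ T₁, Even (hammingNorm x)) ∧
  ∀ x : Fin n → ZMod 2, Odd (hammingNorm x) →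
    (T₀.filter fun y => hammingDist x y = 1).card =
      (T₁.filter fun y => hammingDist x y = 1).card ∧
    (T₀.filter fun y => hammingDist x y = 1).card ≤ 1

/-- a pair of disjoint nonempty sets of even-weight words is an
extended 1-perfect trade iff the subgraph of the halved n-cube induced by
T₀ ∪ T₁ is bipartite with parts T₀, T₁ and regular of degree n/2. -/
theorem stmt_8 (n : ℕ) (hn : 0 < n) (hne : Even n)
    (T₀ T₁ : Finset (Fin n → ZMod 2))
    (h0 : T₀.Nonempty) (h1 : T₁.Nonempty) (hd : Disjoint T₀ T₁)
    (hev : ∀ x ∈ T₀ ∪ T₁, Even (hammingNorm x)) :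
    IsExtTrade T₀ T₁ ↔
      ((∀ x ∈ T₀, ∀ y ∈ T₀, x ≠ y → hammingDist x y ≠ 2) ∧
       (∀ x ∈ T₁, ∀ y ∈ T₁, x ≠ y → hammingDist x y ≠ 2) ∧
       (∀ x ∈ T₀, (T₁.filter fun y => hammingDist x y = 2).card = n / 2) ∧
       (∀ x ∈ T₁, (T₀.filter fun y => hammingDist x y = 2).card = n / 2)) := by
  have hev0 : ∀ v ∈ T₀, Even (hammingNorm v) :=
    fun v hv => hev v (Finset.mem_union_left _ hv)
  have hev1 : ∀ v ∈ T₁, Even (hammingNorm v) :=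
    fun v hv => hev v (Finset.mem_union_right _ hv)
  constructor
  · rintro ⟨-, -, -, -, htr⟩
    refine ⟨?_, ?_, ?_, ?_⟩
    · exact fwd_free hev0 (fun x hx => (htr x hx).2)
    · exact fwd_free hev1 (fun x hx => by
        rw [← (htr x hx).1]; exact (htr x hx).2)
    · intro c hc
      exact fwd_reg (fun v hv => Finset.disjoint_left.mp hd hv) hev0 htr hc
    · intro c hc
      refine fwd_reg (A := T₁) (B := T₀)
        (fun v hv hv0 => Finset.disjoint_left.mp hd hv0 hv) hev1
        (fun z hz => ⟨((htr z hz).1).symm, ?_⟩) hc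
      rw [← (htr z hz).1]
      exact (htr z hz).2
  · rintro ⟨ha, hb, hc0, hc1⟩
    refine ⟨h0, h1, hd, hev, ?_⟩
    intro x hodd
    have le0 := bwd_le_one hev0 ha x
    have le1 := bwd_le_one hev1 hb x
    have hiff01 : (T₀.filter fun y => hammingDist x y = 1).Nonempty →
        (T₁.filter fun y => hammingDist x y = 1).Nonempty := by
      rintro ⟨y, hy⟩
      rw [Finset.mem_filter] at hy
      obtain ⟨z, hzB, hz1⟩ := bwd_exist hn hne hb (hc0 y hy.1) hy.2
      exact ⟨z, Finset.mem_filter.mpr ⟨hzB, hz1⟩⟩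
    have hiff10 : (T₁.filter fun y => hammingDist x y = 1).Nonempty →
        (T₀.filter fun y => hammingDist x y = 1).Nonempty := by
      rintro ⟨y, hy⟩
      rw [Finset.mem_filter] at hy
      obtain ⟨z, hzB, hz1⟩ := bwd_exist hn hne ha (hc1 y hy.1) hy.2
      exact ⟨z, Finset.mem_filter.mpr ⟨hzB, hz1⟩⟩
    refine ⟨?_, le0⟩
    rcases Nat.eq_zero_or_pos (T₀.filter fun y => hammingDist x y = 1).card with hz | hp
    · rcases Nat.eq_zero_or_pos (T₁.filter fun y => hammingDist x y = 1).card with hz' | hp'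
      · omega
      · have := Finset.card_pos.mpr (hiff10 (Finset.card_pos.mp hp'))
        omega
    · have := Finset.card_pos.mpr (hiff01 (Finset.card_pos.mp hp))
      omega
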